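/- For odd n ≥ 3, with λ ≥ 0 and μ > 0, the infinity operator norm of the product ∏_{m=0}^{(n-3)/2} S_{n-2m} (with S as in the power-series recursion) is at most 3(λ+μ)(n+1) / (μ · 2ⁿ · ((n-1)/2)!²). -/

import Mathlib

open Matrix BigOperators

/-- The `∞`-norm of a vector. -/
noncomputable def vecInf {N : ℕ} (x : Fin N → ℝ) : ℝ := ⨆ i, |x i|

/-- The operator `∞`-norm of a square matrix. -/
noncomputable def opInf {N : ℕ} (A : Matrix (Fin N) (Fin N) ℝ) : ℝ :=
  sSup {c : ℝ | ∃ x : Fin N → ℝ, x ≠ 0 ∧ c = vecInf (A.mulVec x) / vecInf x}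

/-- The `2×2` matrix `S_n` appearing in the power-series recursion. -/
noncomputable def Smat (lam mu : ℝ) (n : ℕ) : Matrix (Fin 2) (Fin 2) ℝ :=
  !![-(lam / mu) * (1 / (((n : ℝ) + 1) * ((n : ℝ) - 1))),
       -((lam + mu) / mu) * (1 / (((n : ℝ) + 1) * ((n : ℝ) - 1) ^ 2));
     ((lam + mu) / mu) * (1 / ((n : ℝ) - 1)),
       ((lam + 2 * mu) / mu) * (1 / ((n : ℝ) - 1) ^ 2)]

/-- Closed form for the product `S_{2k+1} S_{2k-1} ⋯ S_3`. -/
noncomputable def Pmat (lam mu : ℝ) (k : ℕ) : Matrix (Fin 2) (Fin 2) ℝ :=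
  ((2 : ℝ) ^ (2 * k) * (Nat.factorial k : ℝ) ^ 2)⁻¹ •
    !![ -(((k : ℝ) - 1) + (k : ℝ) * (lam / mu)) / ((k : ℝ) + 1),
          -((lam / mu + 1) * (k : ℝ)) / (2 * ((k : ℝ) + 1));
        2 * (k : ℝ) * (lam / mu + 1),
          ((k : ℝ) + 1) + (k : ℝ) * (lam / mu) ]

set_option maxHeartbeats 2000000 in
lemma Smat_mul_Pmat (lam mu : ℝ) (hmu : mu ≠ 0) (k : ℕ) :
    Smat lam mu (2 * k + 3) * Pmat lam mu k = Pmat lam mu (k + 1) := by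
  have hp2 : (2 : ℝ) ^ (2 * (k + 1)) = 2 ^ (2 * k) * 4 := by
    have h : 2 * (k + 1) = 2 * k + 2 := by ring
    rw [h, pow_add]; norm_num
  ext i j
  fin_cases i <;> fin_cases j <;>
  · simp only [Smat, Pmat, Matrix.mul_apply, Fin.sum_univ_two, Matrix.smul_apply,
      Matrix.cons_val', Matrix.cons_val_zero, Matrix.cons_val_one, Matrix.head_cons,
      Matrix.head_fin_const, Matrix.empty_val', Matrix.cons_val_fin_one, smul_eq_mul,
      Nat.factorial_succ, hp2, Matrix.of_apply]
    push_cast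
    have h0 : (0:ℝ) ≤ (k:ℝ) := Nat.cast_nonneg k
    have hF : ((Nat.factorial k : ℝ)) ≠ 0 := by exact_mod_cast k.factorial_ne_zero
    have hP : ((2:ℝ) ^ (2*k)) ≠ 0 := by positivity
    generalize (k:ℝ) = c at h0 ⊢
    generalize ((Nat.factorial k : ℝ)) = F at hF ⊢
    generalize ((2:ℝ) ^ (2*k)) = p at hP ⊢
    have h1 : c + 1 ≠ 0 := by intro h; linarith
    have h2 : c + 1 + 1 ≠ 0 := by intro h; linarith
    have hA : 2 * c + 3 + 1 ≠ 0 := by intro h; linarith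
    have hB : 2 * c + 3 - 1 ≠ 0 := by intro h; linarith
    field_simp
    ring

lemma prod_eq_Pmat (lam mu : ℝ) (hmu : mu ≠ 0) (k : ℕ) :
    ((List.range k).map (fun m => Smat lam mu (2 * k + 1 - 2 * m))).prod
      = Pmat lam mu k := by
  induction k with
  | zero =>
      simp only [List.range_zero, List.map_nil, List.prod_nil, Pmat]
      ext i j
      fin_cases i <;> fin_cases j <;>
        simp [Matrix.one_apply]
  | succ k ih =>
      rw [List.range_succ_eq_map, List.map_cons, List.prod_cons, List.map_map]
      have harg : (2 * (k + 1) + 1 - 2 * 0) = 2 * k + 3 := by omega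
      rw [harg]
      have hfun : ((fun m => Smat lam mu (2 * (k + 1) + 1 - 2 * m)) ∘ Nat.succ)
          = fun m => Smat lam mu (2 * k + 1 - 2 * m) := by
        funext m
        have h : 2 * (k + 1) + 1 - 2 * (Nat.succ m) = 2 * k + 1 - 2 * m := by omega
        simp [Function.comp, h]
      rw [hfun, ih, Smat_mul_Pmat lam mu hmu k]

lemma opInf_le_of_rows {A : Matrix (Fin 2) (Fin 2) ℝ} {C : ℝ} (hC : 0 ≤ C)
    (h : ∀ i, |A i 0| + |A i 1| ≤ C) : opInf A ≤ C := by
  apply Real.sSup_le _ hC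
  rintro c ⟨x, hx, rfl⟩
  have hb : BddAbove (Set.range fun i => |x i|) :=
    Set.Finite.bddAbove (Set.finite_range _)
  have hle : ∀ i, |x i| ≤ vecInf x := fun i => le_ciSup hb i
  have hpos : 0 < vecInf x := by
    obtain ⟨j, hj⟩ := Function.ne_iff.1 hx
    exact lt_of_lt_of_le (abs_pos.2 hj) (hle j)
  rw [div_le_iff₀ hpos]
  apply ciSup_le
  intro i
  have hmv : (A.mulVec x) i = A i 0 * x 0 + A i 1 * x 1 := by
    simp [Matrix.mulVec, dotProduct, Fin.sum_univ_two]
  rw [hmv]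
  calc |A i 0 * x 0 + A i 1 * x 1| ≤ |A i 0| * |x 0| + |A i 1| * |x 1| := by
        refine (abs_add_le _ _).trans ?_
        rw [abs_mul, abs_mul]
    _ ≤ |A i 0| * vecInf x + |A i 1| * vecInf x := by
        gcongr
        exacts [hle 0, hle 1]
    _ = (|A i 0| + |A i 1|) * vecInf x := by ring
    _ ≤ C * vecInf x := mul_le_mul_of_nonneg_right (h i) hpos.le

/-- For odd `n ≥ 3`, the `∞`-operator norm of the product `∏_{m=0}^{(n-3)/2} S_{n-2m}`
is at most `3(λ+μ)(n+1) / (μ 2ⁿ ((n-1)/2)!²)`. -/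
theorem opInf_Smat_prod_bound (lam mu : ℝ) (hl : 0 ≤ lam) (hmu : 0 < mu)
    (n : ℕ) (hn : Odd n) (h3 : 3 ≤ n) :
    opInf (((List.range ((n - 3) / 2 + 1)).map (fun m => Smat lam mu (n - 2 * m))).prod)
      ≤ 3 * (lam + mu) * ((n : ℝ) + 1) /
          (mu * 2 ^ n * ((Nat.factorial ((n - 1) / 2) : ℝ)) ^ 2) := by
  obtain ⟨k, rfl⟩ := hn
  have hk : 1 ≤ k := by omega
  have hidx : (2 * k + 1 - 3) / 2 + 1 = k := by omega
  have hidx2 : (2 * k + 1 - 1) / 2 = k := by omega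
  rw [hidx, hidx2, prod_eq_Pmat lam mu hmu.ne' k]
  set a : ℝ := lam / mu with ha
  have ha0 : 0 ≤ a := div_nonneg hl hmu.le
  have hk0 : (1 : ℝ) ≤ (k : ℝ) := by exact_mod_cast hk
  have hf : (0 : ℝ) < (Nat.factorial k : ℝ) := by
    exact_mod_cast (Nat.factorial_pos k)
  set D : ℝ := (2 : ℝ) ^ (2 * k) * (Nat.factorial k : ℝ) ^ 2 with hD
  have hDpos : 0 < D := by positivity
  have hkp : (0 : ℝ) < (k : ℝ) + 1 := by positivity
  have hCeq : 3 * (lam + mu) * (((2 * k + 1 : ℕ) : ℝ) + 1) /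
      (mu * 2 ^ (2 * k + 1) * ((Nat.factorial k : ℝ)) ^ 2)
      = D⁻¹ * (3 * (a + 1) * ((k : ℝ) + 1)) := by
    rw [ha, hD]
    have hpw : (2 : ℝ) ^ (2 * k + 1) = 2 ^ (2 * k) * 2 := by rw [pow_succ]
    push_cast
    rw [hpw]
    field_simp
    ring
  rw [hCeq]
  apply opInf_le_of_rows
  · positivity
  · intro i
    fin_cases i
    · simp only [Pmat, Matrix.smul_apply, Matrix.cons_val', Matrix.cons_val_zero,
        Matrix.cons_val_one, Matrix.head_cons, Matrix.empty_val', Matrix.cons_val_fin_one,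
        Matrix.head_fin_const, smul_eq_mul, Fin.mk_zero, Fin.mk_one, Matrix.of_apply, Matrix.cons_val_zero, Matrix.cons_val_one, ← ha, ← hD]
      have habs : ∀ X Y : ℝ, |D⁻¹ * X| + |D⁻¹ * Y| = D⁻¹ * |X| + D⁻¹ * |Y| := by
        intro X Y
        rw [abs_mul, abs_mul, abs_of_nonneg (by positivity : (0:ℝ) ≤ D⁻¹)]
      rw [habs]
      have e1 : |(-(((k : ℝ) - 1) + (k : ℝ) * a) / ((k : ℝ) + 1))|
          = (((k : ℝ) - 1) + (k : ℝ) * a) / ((k : ℝ) + 1) := by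
        rw [abs_div, abs_neg, abs_of_nonneg (by nlinarith), abs_of_pos hkp]
      have e2 : |(-((a + 1) * (k : ℝ)) / (2 * ((k : ℝ) + 1)))|
          = ((a + 1) * (k : ℝ)) / (2 * ((k : ℝ) + 1)) := by
        rw [abs_div, abs_neg, abs_of_nonneg (by nlinarith), abs_of_pos (by positivity)]
      rw [e1, e2, ← mul_add]
      apply mul_le_mul_of_nonneg_left _ (by positivity)
      rw [div_add_div _ _ (ne_of_gt hkp) (by positivity : (2 * ((k:ℝ)+1)) ≠ 0),
        div_le_iff₀ (by positivity)]
      have c0 : (0:ℝ) ≤ (k:ℝ) := Nat.cast_nonneg k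
      nlinarith [mul_nonneg ha0 c0, mul_nonneg (mul_nonneg ha0 c0) c0,
        mul_nonneg (mul_nonneg (mul_nonneg ha0 c0) c0) c0,
        mul_nonneg c0 c0, mul_nonneg (mul_nonneg c0 c0) c0]
    · simp only [Pmat, Matrix.smul_apply, Matrix.cons_val', Matrix.cons_val_zero,
        Matrix.cons_val_one, Matrix.head_cons, Matrix.empty_val', Matrix.cons_val_fin_one,
        Matrix.head_fin_const, smul_eq_mul, Fin.mk_zero, Fin.mk_one, Matrix.of_apply, Matrix.cons_val_zero, Matrix.cons_val_one, ← ha, ← hD]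
      have habs : ∀ X Y : ℝ, |D⁻¹ * X| + |D⁻¹ * Y| = D⁻¹ * |X| + D⁻¹ * |Y| := by
        intro X Y
        rw [abs_mul, abs_mul, abs_of_nonneg (by positivity : (0:ℝ) ≤ D⁻¹)]
      rw [habs]
      have e1 : |2 * (k : ℝ) * (a + 1)| = 2 * (k : ℝ) * (a + 1) := by
        rw [abs_of_nonneg (by positivity)]
      have e2 : |((k : ℝ) + 1) + (k : ℝ) * a| = ((k : ℝ) + 1) + (k : ℝ) * a := by
        rw [abs_of_nonneg (by positivity)]
      rw [e1, e2, ← mul_add]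
      apply mul_le_mul_of_nonneg_left _ (by positivity)
      have c0 : (0:ℝ) ≤ (k:ℝ) := Nat.cast_nonneg k
      nlinarith [mul_nonneg ha0 c0]
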